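/- Let V : ℝ → ℝ be twice continuously differentiable on [0,∞) with V(0) = 1, V'(0) = 0, V, V', V'' integrable on (0,∞), and V(x) → 0, V'(x) → 0 as x → ∞. Then 4z² · V̂(2z) · V̂(−2z) = 1 + o(1/z) as real z → ∞, where V̂(z) = ∫_0^∞ V(x) e^{-izx} dx; more precisely, z · ( 4z² · V̂(2z) · V̂(−2z) − 1 ) → 0 as z → ∞ through real values. -/

import Mathlib

open Complex MeasureTheory Filter

/-- Integration by parts for the half-line Fourier transform. -/
lemma halfline_ibp (f f' : ℝ → ℝ) (t : ℝ) (ht : t ≠ 0)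
    (hderiv : ∀ x ∈ Set.Ioi (0:ℝ), HasDerivAt f (f' x) x)
    (h0 : Tendsto f (nhdsWithin 0 (Set.Ioi 0)) (nhds (f 0)))
    (hfint : IntegrableOn f (Set.Ioi 0))
    (hf'int : IntegrableOn f' (Set.Ioi 0))
    (hftop : Tendsto f atTop (nhds 0)) :
    ∫ x in Set.Ioi (0:ℝ), (f x : ℂ) * Complex.exp (-Complex.I * t * x)
      = (f 0 : ℂ) / (Complex.I * t)
        + (1/(Complex.I * t)) * ∫ x in Set.Ioi (0:ℝ), (f' x : ℂ) * Complex.exp (-Complex.I * t * x) := by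
  set c : ℂ := -Complex.I * t with hc
  have hc0 : c ≠ 0 := by
    simp [hc, Complex.I_ne_zero, Complex.ofReal_eq_zero, ht]
  set u : ℝ → ℂ := fun x => (f x : ℂ)
  set u' : ℝ → ℂ := fun x => (f' x : ℂ)
  set v : ℝ → ℂ := fun x : ℝ => Complex.exp (c * x) / c
  set v' : ℝ → ℂ := fun x : ℝ => Complex.exp (c * x)
  have hexp : ∀ x : ℝ, HasDerivAt (fun y : ℝ => Complex.exp (c * y)) (c * Complex.exp (c * x)) x := by
    intro x
    have h1 : HasDerivAt (fun y : ℝ => ((y : ℂ))) 1 x := hasDerivAt_id (x:ℝ) |>.ofReal_comp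
    have h2 : HasDerivAt (fun y : ℝ => c * (y : ℂ)) c x := by
      simpa using h1.const_mul c
    simpa [mul_comm] using h2.cexp
  have hv : ∀ x ∈ Set.Ioi (0:ℝ), HasDerivAt v (v' x) x := by
    intro x _
    have := (hexp x).div_const c
    simpa [v, v', mul_div_assoc, mul_div_cancel_left₀ _ hc0] using this
  have hu : ∀ x ∈ Set.Ioi (0:ℝ), HasDerivAt u (u' x) x := fun x hx => (hderiv x hx).ofReal_comp
  have hexpnorm : ∀ x : ℝ, ‖Complex.exp (c * x)‖ = 1 := by
    intro x
    rw [Complex.norm_exp]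
    have : (c * x).re = 0 := by simp [hc]
    rw [this, Real.exp_zero]
  have hcont_exp : Continuous (fun x : ℝ => Complex.exp (c * x)) :=
    Complex.continuous_exp.comp (continuous_const.mul Complex.continuous_ofReal)
  have humeas : AEStronglyMeasurable u (volume.restrict (Set.Ioi 0)) :=
    Complex.continuous_ofReal.comp_aestronglyMeasurable hfint.aestronglyMeasurable
  have hu'meas : AEStronglyMeasurable u' (volume.restrict (Set.Ioi 0)) :=
    Complex.continuous_ofReal.comp_aestronglyMeasurable hf'int.aestronglyMeasurable
  have huv' : IntegrableOn (u * v') (Set.Ioi 0) := by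
    apply Integrable.mono' hfint.norm
      (humeas.mul (hcont_exp.aestronglyMeasurable.restrict))
    filter_upwards with x
    simp only [Pi.mul_apply, norm_mul, hexpnorm, mul_one, u, Complex.norm_real]
    exact le_of_eq rfl
  have hu'v : IntegrableOn (u' * v) (Set.Ioi 0) := by
    apply Integrable.mono' (hf'int.norm.div_const ‖c‖)
      (hu'meas.mul ((hcont_exp.div_const c).aestronglyMeasurable.restrict))
    filter_upwards with x
    simp only [Pi.mul_apply, norm_mul, v, norm_div, hexpnorm, u', Complex.norm_real]
    exact le_of_eq (by ring)
  have h_zero : Tendsto (u * v) (nhdsWithin 0 (Set.Ioi 0)) (nhds ((f 0 : ℂ) / c)) := by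
    have h1 : Tendsto u (nhdsWithin 0 (Set.Ioi 0)) (nhds ((f 0 : ℂ))) :=
      (Complex.continuous_ofReal.continuousAt.tendsto).comp h0
    have h2 : Tendsto v (nhdsWithin 0 (Set.Ioi 0)) (nhds (1 / c)) := by
      have := ((hcont_exp.div_const c).tendsto 0).mono_left
        (nhdsWithin_le_nhds (s := Set.Ioi (0:ℝ)))
      simpa [v] using this
    have := h1.mul h2
    simpa [div_eq_mul_inv, one_mul, mul_comm, Pi.mul_def] using this
  have h_infty : Tendsto (u * v) atTop (nhds 0) := by
    have hb : ∀ x, ‖(u * v) x‖ ≤ |f x| * (1/‖c‖) := by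
      intro x
      simp only [Pi.mul_apply, norm_mul, v, norm_div, hexpnorm, u, Complex.norm_real,
        Real.norm_eq_abs]
      exact le_of_eq (by ring)
    exact squeeze_zero_norm hb (by simpa using (hftop.abs.mul_const (1/‖c‖)))
  have IBP := integral_Ioi_mul_deriv_eq_deriv_mul hu hv huv' hu'v h_zero h_infty
  have hint_uv' : (∫ x in Set.Ioi (0:ℝ), u x * v' x)
      = ∫ x in Set.Ioi (0:ℝ), (f x : ℂ) * Complex.exp (-Complex.I * t * x) := by
    apply integral_congr_ae; filter_upwards with x
    simp [u, v', hc, mul_assoc]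
  have hint_u'v : (∫ x in Set.Ioi (0:ℝ), u' x * v x)
      = (1/c) * ∫ x in Set.Ioi (0:ℝ), (f' x : ℂ) * Complex.exp (-Complex.I * t * x) := by
    rw [← integral_const_mul]
    apply integral_congr_ae; filter_upwards with x
    simp only [u', v, hc]
    field_simp
  rw [hint_uv', hint_u'v] at IBP
  rw [IBP]
  have ht' : (t:ℂ) ≠ 0 := Complex.ofReal_ne_zero.mpr ht
  rw [hc]
  field_simp
  ring

lemma RL_eval (h : ℝ → ℝ) (w : ℝ) :
    (∫ v : ℝ, Real.fourierChar (-(v * w)) • Set.indicator (Set.Ioi 0) (fun x => (h x : ℂ)) v)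
      = ∫ x in Set.Ioi (0:ℝ), (h x : ℂ) * Complex.exp (-Complex.I * ((2 * Real.pi * w : ℝ):ℂ) * x) := by
  rw [← MeasureTheory.integral_indicator measurableSet_Ioi]
  apply integral_congr_ae
  filter_upwards with v
  by_cases hv : v ∈ Set.Ioi (0:ℝ)
  · rw [Set.indicator_of_mem hv, Set.indicator_of_mem hv, Circle.smul_def,
      Real.fourierChar_apply]
    have : ((2 * Real.pi * -(v * w) : ℝ) : ℂ) * Complex.I
        = -Complex.I * ((2 * Real.pi * w : ℝ):ℂ) * v := by push_cast; ring
    rw [this, smul_eq_mul]; ring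
  · simp [Set.indicator_of_notMem hv]

lemma RL_halfline (h : ℝ → ℝ) :
    Tendsto (fun w : ℝ => ∫ x in Set.Ioi (0:ℝ),
        (h x : ℂ) * Complex.exp (-Complex.I * ((2 * Real.pi * w : ℝ):ℂ) * x))
      (Filter.cocompact ℝ) (nhds 0) := by
  have RL := Real.tendsto_integral_exp_smul_cocompact
    (Set.indicator (Set.Ioi 0) (fun x => (h x : ℂ)))
  exact RL.congr (fun w => RL_eval h w)

lemma fourier_alg_aux (w a b : ℂ) (hw : w ≠ 0) :
    w * (4*w^2 * (1/(Complex.I*(2*w)) + (1/(Complex.I*(2*w)))^2 * a)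
      * (1/(Complex.I*(-(2*w))) + (1/(Complex.I*(-(2*w))))^2 * b) - 1)
    = Complex.I * (b - a)/2 + a * b * (4*w)⁻¹ := by
  have hI : Complex.I ≠ 0 := Complex.I_ne_zero
  have h1 : ∀ x : ℂ, 1/(Complex.I*x) = -Complex.I/x := by
    intro x
    rw [one_div, mul_inv, Complex.inv_I]
    ring
  rw [h1, h1]
  have h2 : Complex.I^2 = -1 := Complex.I_sq
  have h3 : Complex.I^3 = -Complex.I := by rw [pow_succ, h2]; ring
  have h4 : Complex.I^4 = 1 := by rw [pow_succ, h3]; simp [h2]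
  field_simp
  ring_nf
  simp only [h2, h3, h4]
  ring

/-- For `V` of class `C²` on `[0,∞)` with `V(0)=1`, `V'(0)=0`, `V, V', V''` integrable and
`V, V' → 0` at infinity, the half-line Fourier transform `V̂(z) = ∫_0^∞ V(x)e^{-izx} dx`
satisfies `4z²·V̂(2z)·V̂(−2z) = 1 + o(1/z)` as real `z → ∞`:
`z·(4z²·V̂(2z)·V̂(−2z) − 1) → 0` as `z → +∞`. -/
theorem fourier_halfLine_main_asymptotic (V : ℝ → ℝ)
    (hV : ContDiffOn ℝ 2 V (Set.Ici (0:ℝ)))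
    (hV0 : V 0 = 1)
    (hV'0 : derivWithin V (Set.Ici (0:ℝ)) 0 = 0)
    (hVint : IntegrableOn V (Set.Ioi (0:ℝ)))
    (hV'int : IntegrableOn (derivWithin V (Set.Ici (0:ℝ))) (Set.Ioi (0:ℝ)))
    (hV''int : IntegrableOn (derivWithin (derivWithin V (Set.Ici (0:ℝ))) (Set.Ici (0:ℝ)))
      (Set.Ioi (0:ℝ)))
    (hVlim : Filter.Tendsto V Filter.atTop (nhds 0))
    (hV'lim : Filter.Tendsto (derivWithin V (Set.Ici (0:ℝ))) Filter.atTop (nhds 0))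
    (Vhat : ℂ → ℂ)
    (hVhat : ∀ z : ℂ, Vhat z = ∫ x in Set.Ioi (0:ℝ), (V x : ℂ) * Complex.exp (-Complex.I * z * x)) :
    Filter.Tendsto
      (fun z : ℝ => (z : ℂ) * (4 * (z : ℂ)^2 * Vhat (2 * z) * Vhat (-(2 * z)) - 1))
      Filter.atTop (nhds 0) := by
  set V₁ : ℝ → ℝ := derivWithin V (Set.Ici (0:ℝ)) with hV₁def
  set V₂ : ℝ → ℝ := derivWithin V₁ (Set.Ici (0:ℝ)) with hV₂def
  set W : ℝ → ℂ := fun t => ∫ x in Set.Ioi (0:ℝ), (V₂ x : ℂ) * Complex.exp (-Complex.I * t * x)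
    with hWdef
  -- smoothness of V₁
  have hV₁smooth : ContDiffOn ℝ 1 V₁ (Set.Ici (0:ℝ)) := by
    apply hV.derivWithin (uniqueDiffOn_Ici 0)
    norm_num
  -- derivatives as genuine derivatives on the open half-line
  have hasDerivV : ∀ x ∈ Set.Ioi (0:ℝ), HasDerivAt V (V₁ x) x := by
    intro x hx
    have hnb : Set.Ici (0:ℝ) ∈ nhds x := Ici_mem_nhds hx
    have hd : DifferentiableWithinAt ℝ V (Set.Ici (0:ℝ)) x :=
      (hV.differentiableOn two_ne_zero) x (Set.mem_Ici.mpr (le_of_lt hx))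
    have hd' : DifferentiableAt ℝ V x := hd.differentiableAt hnb
    have : V₁ x = deriv V x := by rw [hV₁def]; exact derivWithin_of_mem_nhds hnb
    rw [this]
    exact hd'.hasDerivAt
  have hasDerivV₁ : ∀ x ∈ Set.Ioi (0:ℝ), HasDerivAt V₁ (V₂ x) x := by
    intro x hx
    have hnb : Set.Ici (0:ℝ) ∈ nhds x := Ici_mem_nhds hx
    have hd : DifferentiableWithinAt ℝ V₁ (Set.Ici (0:ℝ)) x :=
      (hV₁smooth.differentiableOn one_ne_zero) x (Set.mem_Ici.mpr (le_of_lt hx))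
    have hd' : DifferentiableAt ℝ V₁ x := hd.differentiableAt hnb
    have : V₂ x = deriv V₁ x := by rw [hV₂def]; exact derivWithin_of_mem_nhds hnb
    rw [this]
    exact hd'.hasDerivAt
  -- right-continuity at 0
  have h0V : Tendsto V (nhdsWithin 0 (Set.Ioi 0)) (nhds (V 0)) :=
    ((hV.continuousOn 0 Set.self_mem_Ici)).mono_left
      (nhdsWithin_mono 0 Set.Ioi_subset_Ici_self)
  have h0V₁ : Tendsto V₁ (nhdsWithin 0 (Set.Ioi 0)) (nhds (V₁ 0)) :=
    ((hV₁smooth.continuousOn 0 Set.self_mem_Ici)).mono_left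
      (nhdsWithin_mono 0 Set.Ioi_subset_Ici_self)
  -- two step integration by parts
  have key : ∀ t : ℝ, t ≠ 0 →
      (∫ x in Set.Ioi (0:ℝ), (V x : ℂ) * Complex.exp (-Complex.I * t * x))
        = 1/(Complex.I * t) + (1/(Complex.I * t))^2 * W t := by
    intro t ht
    rw [halfline_ibp V V₁ t ht hasDerivV h0V hVint hV'int hVlim,
      halfline_ibp V₁ V₂ t ht hasDerivV₁ h0V₁ hV'int hV''int hV'lim]
    rw [hV0]
    rw [show V₁ 0 = 0 from hV'0]
    push_cast
    rw [hWdef]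
    ring
  -- consequence for Vhat
  have hVhat_eq : ∀ z : ℝ, z ≠ 0 → Vhat (2 * (z:ℂ))
      = 1/(Complex.I * ((2*z : ℝ):ℂ)) + (1/(Complex.I * ((2*z : ℝ):ℂ)))^2 * W (2*z) := by
    intro z hz
    have h2 : (2*(z:ℂ)) = ((2*z : ℝ):ℂ) := by push_cast; ring
    rw [hVhat, h2]
    exact key (2*z) (mul_ne_zero two_ne_zero hz)
  have hVhat_eq' : ∀ z : ℝ, z ≠ 0 → Vhat (-(2 * (z:ℂ)))
      = 1/(Complex.I * ((-(2*z) : ℝ):ℂ)) + (1/(Complex.I * ((-(2*z) : ℝ):ℂ)))^2 * W (-(2*z)) := by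
    intro z hz
    have h2 : (-(2*(z:ℂ))) = ((-(2*z) : ℝ):ℂ) := by push_cast; ring
    rw [hVhat, h2]
    exact key (-(2*z)) (neg_ne_zero.mpr (mul_ne_zero two_ne_zero hz))
  -- the error term
  set E : ℝ → ℂ := fun z =>
    Complex.I * (W (-(2*z)) - W (2*z))/2 + W (2*z) * W (-(2*z)) * (4*(z:ℂ))⁻¹ with hEdef
  -- Riemann-Lebesgue for W along the two directions
  have t1 : Tendsto (fun z : ℝ => W (2*z)) atTop (nhds 0) := by
    have hdiv : Tendsto (fun z : ℝ => z / Real.pi) atTop atTop :=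
      tendsto_id.atTop_div_const Real.pi_pos
    have hmap : Tendsto (fun z : ℝ => z / Real.pi) atTop (Filter.cocompact ℝ) := by
      refine hdiv.mono_right ?_
      rw [cocompact_eq_atBot_atTop]
      exact le_sup_right
    have := (RL_halfline V₂).comp hmap
    apply this.congr
    intro z
    have : (2 * Real.pi * (z / Real.pi) : ℝ) = 2*z := by
      field_simp
    simp only [Function.comp_apply, this, hWdef]
  have t2 : Tendsto (fun z : ℝ => W (-(2*z))) atTop (nhds 0) := by
    have hdiv : Tendsto (fun z : ℝ => -z / Real.pi) atTop atBot := by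
      have h1 : Tendsto (fun z : ℝ => z / Real.pi) atTop atTop :=
        tendsto_id.atTop_div_const Real.pi_pos
      have := tendsto_neg_atTop_atBot.comp h1
      apply this.congr
      intro z
      simp [Function.comp_apply, neg_div]
    have hmap : Tendsto (fun z : ℝ => -z / Real.pi) atTop (Filter.cocompact ℝ) := by
      refine hdiv.mono_right ?_
      rw [cocompact_eq_atBot_atTop]
      exact le_sup_left
    have := (RL_halfline V₂).comp hmap
    apply this.congr
    intro z
    have : (2 * Real.pi * (-z / Real.pi) : ℝ) = -(2*z) := by
      field_simp
    simp only [Function.comp_apply, this, hWdef]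
  -- the inverse factor tends to zero
  have tinv : Tendsto (fun z : ℝ => (4*(z:ℂ))⁻¹) atTop (nhds 0) := by
    have h1 : Tendsto (fun z : ℝ => 4*z) atTop atTop :=
      Tendsto.const_mul_atTop (by norm_num) tendsto_id
    have h2 : Tendsto (fun z : ℝ => (4*z)⁻¹) atTop (nhds 0) :=
      tendsto_inv_atTop_zero.comp h1
    have h3 := (Complex.continuous_ofReal.tendsto 0).comp h2
    apply h3.congr
    intro z
    simp [Function.comp_apply]
  have tE : Tendsto E atTop (nhds 0) := by
    have hA : Tendsto (fun z : ℝ => Complex.I * (W (-(2*z)) - W (2*z))/2) atTop (nhds 0) := by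
      have := ((t2.sub t1).const_mul Complex.I).div_const 2
      simpa using this
    have hB : Tendsto (fun z : ℝ => W (2*z) * W (-(2*z)) * (4*(z:ℂ))⁻¹) atTop (nhds 0) := by
      have := (t1.mul t2).mul tinv
      simpa using this
    have := hA.add hB
    simpa [hEdef] using this
  -- eventual equality with the target quantity
  have heq : E =ᶠ[atTop] fun z : ℝ =>
      (z : ℂ) * (4 * (z : ℂ)^2 * Vhat (2 * z) * Vhat (-(2 * z)) - 1) := by
    filter_upwards [eventually_gt_atTop (0:ℝ)] with z hz
    have hz' : (z:ℂ) ≠ 0 := Complex.ofReal_ne_zero.mpr hz.ne'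
    rw [hVhat_eq z hz.ne', hVhat_eq' z hz.ne', hEdef]
    have halg := fourier_alg_aux (z:ℂ) (W (2*z)) (W (-(2*z))) hz'
    push_cast
    linear_combination -halg
  exact tE.congr' heq
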